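/- Let 𝒞 be a BMZ-collection, let ℛ = (R_1, …, R_r) ∈ 𝔅(𝒞), and let π be a permutation of [r]. Define ℛ^π := (R_{π(1)} \ {z}, …, R_{π(r−1)} \ {z}, R_{π(r)} ∪ {z}). Then csgn(ℛ^π) = sgn(π)^{d+1} · csgn(ℛ) and gsgn(ℛ^π) = sgn(π)^{d+1} · gsgn(ℛ). -/

import Mathlib

open Finset

namespace BMZ

noncomputable section

/-- Points of `ℝ^d`. -/
abbrev Pt (d : ℕ) := EuclideanSpace ℝ (Fin d)

/-- The space `ℝ^N`, `N = (d+1)(r-1)`, with `r = s+2`, presented with double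
indices `(k, l) ∈ [d+1] × [r-1]`. -/
abbrev CSp (d s : ℕ) := EuclideanSpace ℝ (Fin (d + 1) × Fin (s + 1))

/-- `w` is the vertex set of a regular `(r-1)`-dimensional simplex centered at the
origin (here `r = s+2`): the vertices are affinely independent, pairwise
equidistant with a positive common distance, and their barycenter is the origin. -/
def IsRegularSimplex {s : ℕ} (w : Fin (s + 2) → EuclideanSpace ℝ (Fin (s + 1))) : Prop :=
  AffineIndependent ℝ w ∧
    (∃ e : ℝ, 0 < e ∧ ∀ i j, i ≠ j → dist (w i) (w j) = e) ∧
    ∑ i, w i = 0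

/-- `x⁺ = (x, 1) ∈ ℝ^{d+1}`. -/
def xplus {d : ℕ} (x : Pt d) : Fin (d + 1) → ℝ := Fin.snoc (x : Fin d → ℝ) 1

/-- The `i`-th clone `φ_i(x) := x⁺ ⊗ w_i ∈ ℝ^N`. -/
def clone {d s : ℕ} (w : Fin (s + 2) → EuclideanSpace ℝ (Fin (s + 1)))
    (x : Pt d) (i : Fin (s + 2)) : CSp d s :=
  WithLp.toLp 2 (fun kl => xplus x kl.1 * w i kl.2)

/-- The Sarkaria–Onn transform `Φ(𝒫)` of an `r`-partition `𝒫 = (P_1, …, P_r)`: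
for every point `p ∈ P_i` we put the `i`-th clone of `p` into `Φ(𝒫)`. -/
def Phi {d s : ℕ} (w : Fin (s + 2) → EuclideanSpace ℝ (Fin (s + 1)))
    (P : Fin (s + 2) → Finset (Pt d)) : Set (CSp d s) :=
  ⋃ i, (fun p => clone w p i) '' (P i : Set (Pt d))

/-- `N = (d+1)(r-1)`, the number of points of a BMZ-collection other than `z`. -/
abbrev NN (d s : ℕ) : ℕ := (d + 1) * (s + 1)

/-- Indices of the points `c_1, …, c_{N+1}` of a BMZ-collection (the last point
is `z`). A BMZ-collection is an injective map `c : Idx d s → Pt d`, with the color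
classes `C_1, …, C_{d+2}` consisting of consecutive points as given by `colorOf`. -/
abbrev Idx (d s : ℕ) := Fin (NN d s + 1)

/-- The color of the `i`-th point: each of the first `d+1` classes consists of
`r-1` consecutive points, and the last class is the singleton `{z}`. -/
def colorOf (d s : ℕ) (i : Idx d s) : Fin (d + 2) :=
  if h : (i : ℕ) < NN d s then
    Fin.castSucc ⟨(i : ℕ) / (s + 1),
      Nat.div_lt_of_lt_mul (by rw [Nat.mul_comm]; exact h)⟩
  else Fin.last (d + 1)

/-- Maximal rainbow `r`-partitions `ℛ = (R_1, …, R_r) ∈ 𝔅(𝒞)` (with `z ∈ R_r`) are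
in bijective correspondence with tuples of permutations `π_k` of `[r]`, one for
each of the first `d+1` colors: `π_k j` is the index of the class containing the
`j`-th point of `C_k` for `j ≤ r-1`, and `π_k r` is the index of the unique class
containing no point of `C_k`. -/
abbrev PartEnc (d s : ℕ) := Fin (d + 1) → Equiv.Perm (Fin (s + 2))

/-- The class of the `i`-th point in the partition encoded by `σ`; the point `z`
lies in the last class. -/
def classOf {d s : ℕ} (σ : PartEnc d s) (i : Idx d s) : Fin (s + 2) :=
  if h : (i : ℕ) < NN d s then
    σ ⟨(i : ℕ) / (s + 1), Nat.div_lt_of_lt_mul (by rw [Nat.mul_comm]; exact h)⟩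
      (Fin.castSucc ⟨(i : ℕ) % (s + 1), Nat.mod_lt _ (Nat.succ_pos s)⟩)
  else Fin.last (s + 1)

variable {d s : ℕ}

open Classical in
/-- The `k`-th color class of the configuration `c`, as a finite set of points. -/
def colorClass (c : Idx d s → Pt d) (k : Fin (d + 2)) : Finset (Pt d) :=
  (Finset.univ.filter fun i => colorOf d s i = k).image c

open Classical in
/-- The class `R_i` of the partition encoded by `σ`, as a finite set of points. -/
def classSet (c : Idx d s → Pt d) (σ : PartEnc d s) (i : Fin (s + 2)) : Finset (Pt d) :=
  (Finset.univ.filter fun j => classOf σ j = i).image c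

/-- `σ` encodes a Tverberg partition: the convex hulls of its classes have a
common point. -/
def IsTverberg (c : Idx d s → Pt d) (σ : PartEnc d s) : Prop :=
  (⋂ i, convexHull ℝ (classSet c σ i : Set (Pt d))).Nonempty

/-- The clones of all the points of the configuration, w.r.t. the partition `σ`. -/
def allClones (w : Fin (s + 2) → EuclideanSpace ℝ (Fin (s + 1)))
    (c : Idx d s → Pt d) (σ : PartEnc d s) : Idx d s → CSp d s :=
  fun i => clone w (c i) (classOf σ i)

/-- The vertices of `F_ℛ = conv Φ(ℛ - z)`, ordered by the numbering of the points. -/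
def rows (w : Fin (s + 2) → EuclideanSpace ℝ (Fin (s + 1)))
    (c : Idx d s → Pt d) (σ : PartEnc d s) : Fin (NN d s) → CSp d s :=
  fun i => allClones w c σ i.castSucc

/-- `Φ(ℛ - a)`: the clones of all points except `a`. -/
def PhiMinus (w : Fin (s + 2) → EuclideanSpace ℝ (Fin (s + 1)))
    (c : Idx d s → Pt d) (σ : PartEnc d s) (a : Idx d s) : Set (CSp d s) :=
  allClones w c σ '' {i | i ≠ a}

/-- The simplex `F_ℛ = conv Φ(ℛ - z)`. -/
def Fface (w : Fin (s + 2) → EuclideanSpace ℝ (Fin (s + 1)))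
    (c : Idx d s → Pt d) (σ : PartEnc d s) : Set (CSp d s) :=
  convexHull ℝ (Set.range (rows w c σ))

/-- `𝒞` is in sufficiently general position: each `Φ(ℛ - z)` is affinely
independent, and `0 ∉ aff Φ(ℛ - a)` for all `ℛ ∈ 𝔅(𝒞)` and `a ∈ C`. -/
def SuffGenPos (w : Fin (s + 2) → EuclideanSpace ℝ (Fin (s + 1)))
    (c : Idx d s → Pt d) : Prop :=
  (∀ σ : PartEnc d s, AffineIndependent ℝ (rows w c σ)) ∧
  (∀ (σ : PartEnc d s) (a : Idx d s), (0 : CSp d s) ∉ affineSpan ℝ (PhiMinus w c σ a))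

/-- A ridge `conv Φ(ℛ - z - a)`, `a ∈ C \ {z}`. -/
def ridge (w : Fin (s + 2) → EuclideanSpace ℝ (Fin (s + 1)))
    (c : Idx d s → Pt d) (σ : PartEnc d s) (a : Fin (NN d s)) : Set (CSp d s) :=
  convexHull ℝ (rows w c σ '' {i | i ≠ a})

/-- `𝒞` is in almost general position: all ridges avoid the origin. -/
def AlmostGenPos (w : Fin (s + 2) → EuclideanSpace ℝ (Fin (s + 1)))
    (c : Idx d s → Pt d) : Prop :=
  ∀ (σ : PartEnc d s) (a : Fin (NN d s)), (0 : CSp d s) ∉ ridge w c σ a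

/-- The ray emanating from `0` in the direction `u`. -/
def raySet (u : CSp d s) : Set (CSp d s) := {x | ∃ t : ℝ, 0 ≤ t ∧ x = t • u}

/-- A ray emanating from `0` is generic for `𝒞` if it intersects no ridge. -/
def GenericRay (w : Fin (s + 2) → EuclideanSpace ℝ (Fin (s + 1)))
    (c : Idx d s → Pt d) (u : CSp d s) : Prop :=
  ∀ (σ : PartEnc d s) (a : Fin (NN d s)), ∀ x ∈ raySet u, x ∉ ridge w c σ a

/-- The combinatorial sign `csgn(ℛ) = ∏_k sgn(π_k)`. -/
def csgn (σ : PartEnc d s) : ℤ := ∏ k, (Equiv.Perm.sign (σ k) : ℤ)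

/-- The sign of a real number, as an integer. -/
def sgnR (x : ℝ) : ℤ := if 0 < x then 1 else if x < 0 then -1 else 0

/-- The geometric sign `gsgn(ℛ)`: the sign of the determinant of the `N × N`
matrix whose rows are the vertices of `F_ℛ`, ordered by the numbering of the
points of `C`. -/
def gsgn (w : Fin (s + 2) → EuclideanSpace ℝ (Fin (s + 1)))
    (c : Idx d s → Pt d) (σ : PartEnc d s) : ℤ :=
  sgnR (Matrix.det (Matrix.of fun i j : Fin (NN d s) =>
    rows w c σ i (finProdFinEquiv.symm j)))

/-- The sign `sgn(ℛ) = gsgn(ℛ) ⬝ csgn(ℛ)`. -/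
def psgn (w : Fin (s + 2) → EuclideanSpace ℝ (Fin (s + 1)))
    (c : Idx d s → Pt d) (σ : PartEnc d s) : ℤ :=
  gsgn w c σ * csgn σ

/-- `z* = φ_r(z)`. -/
def zstar (w : Fin (s + 2) → EuclideanSpace ℝ (Fin (s + 1)))
    (c : Idx d s → Pt d) : CSp d s :=
  clone w (c (Fin.last (NN d s))) (Fin.last (s + 1))

open Classical in
/-- The degree of `𝒞` measured along the ray from `0` in direction `u`:
`deg_ψ(𝒞) = Σ_{ℛ ∈ 𝔅(𝒞), ψ ∩ F_ℛ ≠ ∅} sgn(ℛ)`. -/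
def degRay (w : Fin (s + 2) → EuclideanSpace ℝ (Fin (s + 1)))
    (c : Idx d s → Pt d) (u : CSp d s) : ℤ :=
  ∑ σ : PartEnc d s, if (raySet u ∩ Fface w c σ).Nonempty then psgn w c σ else 0

/-- The degree `deg(𝒞)`, measured along the ray `ρ` emanating from `0` in the
direction `-z*`. -/
def degC (w : Fin (s + 2) → EuclideanSpace ℝ (Fin (s + 1)))
    (c : Idx d s → Pt d) : ℤ :=
  degRay w c (-(zstar w c))

end

end BMZ

namespace BMZAux

open Matrix Finset Kronecker

noncomputable section

variable {s : ℕ}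

/-- Coordinates of a finite sum in Euclidean space. -/
lemma coordSum {ι : Type*} (t : Finset ι) (v : ι → EuclideanSpace ℝ (Fin (s + 1)))
    (l : Fin (s + 1)) : (∑ i ∈ t, v i) l = ∑ i ∈ t, v i l :=
  by rw [WithLp.ofLp_sum, Finset.sum_apply]

lemma coordNeg (v : EuclideanSpace ℝ (Fin (s + 1))) (l : Fin (s + 1)) :
    (-v) l = -(v l) := rfl

/-- The matrix whose `j`-th row is `w (τ (castSucc j))`. -/
def Mr (w : Fin (s + 2) → EuclideanSpace ℝ (Fin (s + 1))) (f : Equiv.Perm (Fin (s + 2))) :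
    Matrix (Fin (s + 1)) (Fin (s + 1)) ℝ :=
  Matrix.of fun j l => w (f j.castSucc) l

lemma sum_w (w : Fin (s + 2) → EuclideanSpace ℝ (Fin (s + 1))) (hsum : ∑ i, w i = 0)
    (f : Equiv.Perm (Fin (s + 2))) :
    ∑ j : Fin (s + 1), w (f j.castSucc) = -w (f (Fin.last (s + 1))) := by
  have h : ∑ m, w (f m) = 0 := by rw [Equiv.sum_comp f w]; exact hsum
  rw [Fin.sum_univ_castSucc] at h
  exact eq_neg_of_add_eq_zero_left h

lemma det_swap_mul (w : Fin (s + 2) → EuclideanSpace ℝ (Fin (s + 1)))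
    (hsum : ∑ i, w i = 0) :
    ∀ (x y : Fin (s + 2)), x ≠ y → ∀ (f : Equiv.Perm (Fin (s + 2))),
      (Mr w (Equiv.swap x y * f)).det = -(Mr w f).det := by
  -- first, the case where `f.symm x = last`
  have main : ∀ (x y : Fin (s + 2)), x ≠ y → ∀ f : Equiv.Perm (Fin (s + 2)),
      f.symm x = Fin.last (s + 1) →
      (Mr w (Equiv.swap x y * f)).det = -(Mr w f).det := by
    intro x y hxy f hx
    have hy : f.symm y ≠ Fin.last (s + 1) := fun h => hxy (f.symm.injective (hx.trans h.symm))
    obtain ⟨b, hb⟩ := Fin.exists_castSucc_eq.mpr hy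
    have hfb : f b.castSucc = y := by rw [hb, Equiv.apply_symm_apply]
    have hflast : f (Fin.last (s + 1)) = x := by rw [← hx, Equiv.apply_symm_apply]
    have hmat : Mr w (Equiv.swap x y * f) =
        (Mr w f).updateRow b (∑ k, (fun _ : Fin (s + 1) => (-1 : ℝ)) k • (Mr w f) k) := by
      ext j l
      by_cases hj : j = b
      · rw [hj, Matrix.updateRow_self]
        have hrow : (∑ k, (fun _ : Fin (s + 1) => (-1 : ℝ)) k • (Mr w f) k) l
            = ∑ k : Fin (s + 1), -(w (f k.castSucc) l) := by
          rw [Finset.sum_apply]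
          refine Finset.sum_congr rfl fun k _ => ?_
          simp [Mr]
        rw [hrow]
        have h1 : ∑ k : Fin (s + 1), w (f k.castSucc) l = -(w (f (Fin.last (s + 1))) l) := by
          have h := congrArg (fun u => u l) (sum_w w hsum f)
          rw [coordSum] at h
          rw [h, coordNeg]
        have h2 : ∑ k : Fin (s + 1), -(w (f k.castSucc) l)
            = -∑ k : Fin (s + 1), w (f k.castSucc) l := by
          rw [Finset.sum_neg_distrib]
        rw [h2, h1, neg_neg, hflast]
        show w (Equiv.swap x y (f b.castSucc)) l = w x l
        rw [hfb, Equiv.swap_apply_right]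
      · rw [Matrix.updateRow_ne hj]
        show w (Equiv.swap x y (f j.castSucc)) l = w (f j.castSucc) l
        have hnx : f j.castSucc ≠ x := by
          intro h
          have : j.castSucc = Fin.last (s + 1) := by rw [← hx, ← h, Equiv.symm_apply_apply]
          exact (Fin.castSucc_lt_last j).ne this
        have hny : f j.castSucc ≠ y := by
          intro h
          have : j.castSucc = f.symm y := by rw [← h, Equiv.symm_apply_apply]
          exact hj (Fin.castSucc_injective _ (this.trans hb.symm))
        rw [Equiv.swap_apply_of_ne_of_ne hnx hny]
    rw [hmat, Matrix.det_updateRow_sum]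
    simp
  intro x y hxy f
  by_cases hx : f.symm x = Fin.last (s + 1)
  · exact main x y hxy f hx
  by_cases hy : f.symm y = Fin.last (s + 1)
  · rw [Equiv.swap_comm]
    exact main y x (Ne.symm hxy) f hy
  -- both preimages are `castSucc`
  obtain ⟨a, ha⟩ := Fin.exists_castSucc_eq.mpr hx
  obtain ⟨b, hb⟩ := Fin.exists_castSucc_eq.mpr hy
  have hfa : f a.castSucc = x := by rw [ha, Equiv.apply_symm_apply]
  have hfb : f b.castSucc = y := by rw [hb, Equiv.apply_symm_apply]
  have hab : a ≠ b := by
    intro h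
    exact hxy (by rw [← hfa, ← hfb, h])
  have hmat : Mr w (Equiv.swap x y * f) = (Mr w f).submatrix (Equiv.swap a b) id := by
    ext j l
    show w (Equiv.swap x y (f j.castSucc)) l = w (f (Equiv.swap a b j).castSucc) l
    by_cases hj1 : j = a
    · subst hj1
      rw [hfa, Equiv.swap_apply_left, Equiv.swap_apply_left, hfb]
    by_cases hj2 : j = b
    · subst hj2
      rw [hfb, Equiv.swap_apply_right, Equiv.swap_apply_right, hfa]
    have hnx : f j.castSucc ≠ x := fun h =>
      hj1 (Fin.castSucc_injective _ (by rw [ha, ← h, Equiv.symm_apply_apply]))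
    have hny : f j.castSucc ≠ y := fun h =>
      hj2 (Fin.castSucc_injective _ (by rw [hb, ← h, Equiv.symm_apply_apply]))
    rw [Equiv.swap_apply_of_ne_of_ne hnx hny, Equiv.swap_apply_of_ne_of_ne hj1 hj2]
  rw [hmat, Matrix.det_permute, Equiv.Perm.sign_swap hab]
  simp

lemma det_Mr (w : Fin (s + 2) → EuclideanSpace ℝ (Fin (s + 1))) (hsum : ∑ i, w i = 0)
    (f : Equiv.Perm (Fin (s + 2))) :
    (Mr w f).det = ((Equiv.Perm.sign f : ℤ) : ℝ) * (Mr w 1).det := by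
  refine Equiv.Perm.swap_induction_on f (by simp) ?_
  intro g x y hxy hg
  rw [det_swap_mul w hsum x y hxy g, hg, _root_.map_mul, Equiv.Perm.sign_swap hxy]
  push_cast
  ring

lemma det_Mr_one_ne_zero (w : Fin (s + 2) → EuclideanSpace ℝ (Fin (s + 1)))
    (haff : AffineIndependent ℝ w) (hsum : ∑ i, w i = 0) :
    (Mr w 1).det ≠ 0 := by
  intro h0
  obtain ⟨v, hv, hv0⟩ := Matrix.exists_vecMul_eq_zero_iff.mpr h0
  have hlin : ∑ j : Fin (s + 1), v j • w j.castSucc = 0 := by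
    ext l
    rw [coordSum]
    have h := congrFun hv0 l
    simp only [Matrix.vecMul, dotProduct, Mr, Matrix.of_apply] at h
    simpa using h
  set S : ℝ := ∑ j, v j with hS
  set g' : Fin (s + 2) → ℝ := Fin.snoc v 0 with hg'
  set F : Fin (s + 2) → ℝ := fun m => g' m - S / (s + 2) with hF
  have hFsum : ∑ m, F m = 0 := by
    have hg : ∑ m : Fin (s + 2), g' m = S := by
      rw [Fin.sum_univ_castSucc]
      simp [hg', hS]
    have h2 : (s + 2 : ℝ) ≠ 0 := by positivity
    rw [hF]
    rw [Finset.sum_sub_distrib, hg, Finset.sum_const, Finset.card_univ, Fintype.card_fin,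
      nsmul_eq_mul]
    push_cast
    field_simp
    ring
  have hFvec : ∑ m, F m • w m = 0 := by
    have : ∑ m, F m • w m
        = ∑ m, g' m • w m - (S / (s + 2)) • ∑ m, w m := by
      rw [Finset.smul_sum, ← Finset.sum_sub_distrib]
      refine Finset.sum_congr rfl fun m _ => ?_
      rw [hF, sub_smul]
    rw [this, hsum, smul_zero, sub_zero, Fin.sum_univ_castSucc]
    simp only [hg', Fin.snoc_castSucc, Fin.snoc_last, zero_smul, add_zero]
    exact hlin
  have hz := affineIndependent_iff.mp haff Finset.univ F hFsum hFvec
  have hS0 : S = 0 := by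
    have h := hz (Fin.last (s + 1)) (Finset.mem_univ _)
    rw [hF] at h
    simp only [hg', Fin.snoc_last, zero_sub, neg_eq_zero] at h
    have h2 : (s + 2 : ℝ) ≠ 0 := by positivity
    field_simp at h
    simpa using h
  apply hv
  funext j
  have h := hz j.castSucc (Finset.mem_univ _)
  rw [hF] at h
  simp only [hg', Fin.snoc_castSucc, hS0, zero_div, sub_zero] at h
  exact h

lemma sgnR_neg (x : ℝ) : BMZ.sgnR (-x) = -BMZ.sgnR x := by
  unfold BMZ.sgnR
  rcases lt_trichotomy x 0 with h | rfl | h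
  · rw [if_pos (neg_pos.mpr h), if_neg (asymm h), if_pos h]
    norm_num
  · simp
  · rw [if_neg (by linarith : ¬(0:ℝ) < -x), if_pos (neg_lt_zero.mpr h), if_pos h]

lemma sgnR_mul_pm (u : ℤˣ) (n : ℕ) (x : ℝ) :
    BMZ.sgnR (x * (((u : ℤ) : ℝ)) ^ n) = (u : ℤ) ^ n * BMZ.sgnR x := by
  rcases Int.units_eq_one_or u with h | h <;> rw [h]
  · simp
  · rcases Nat.even_or_odd n with he | ho
    · rw [show (((((-1 : ℤˣ) : ℤ)) : ℝ)) = (-1 : ℝ) by norm_num,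
        show (((-1 : ℤˣ) : ℤ)) = (-1 : ℤ) by norm_num, he.neg_one_pow, he.neg_one_pow]
      simp
    · rw [show (((((-1 : ℤˣ) : ℤ)) : ℝ)) = (-1 : ℝ) by norm_num,
        show (((-1 : ℤˣ) : ℤ)) = (-1 : ℤ) by norm_num, ho.neg_one_pow, ho.neg_one_pow,
        mul_neg_one, sgnR_neg]
      ring

/-- Evaluating `classOf` on explicitly given coordinates. -/
lemma classOf_eval {d : ℕ} (σ : BMZ.PartEnc d s) (j : Fin (BMZ.NN d s))
    (k : Fin (d + 1)) (m : Fin (s + 1)) (h : (j : ℕ) = (m : ℕ) + (s + 1) * (k : ℕ)) :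
    BMZ.classOf σ j.castSucc = σ k m.castSucc := by
  have hj : ((j.castSucc : Fin (BMZ.NN d s + 1)) : ℕ) < BMZ.NN d s := by
    simpa using j.isLt
  have h1 : ((j.castSucc : Fin (BMZ.NN d s + 1)) : ℕ) / (s + 1) = (k : ℕ) := by
    rw [Fin.coe_castSucc, h, Nat.add_mul_div_left _ _ (Nat.succ_pos s),
      Nat.div_eq_of_lt m.isLt, zero_add]
  have h2 : ((j.castSucc : Fin (BMZ.NN d s + 1)) : ℕ) % (s + 1) = (m : ℕ) := by
    rw [Fin.coe_castSucc, h, Nat.add_mul_mod_self_left, Nat.mod_eq_of_lt m.isLt]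
  unfold BMZ.classOf
  rw [dif_pos hj]
  congr 1
  · exact congrArg _ (Fin.ext h1)
  · exact congrArg _ (Fin.ext h2)

/-- The combinatorial consequence of `hσ'`: each `σ' k` is `π.symm ∘ σ k`. -/
lemma perm_eq {d : ℕ} (σ σ' : BMZ.PartEnc d s) (π : Equiv.Perm (Fin (s + 2)))
    (hσ' : ∀ j : Fin (BMZ.NN d s),
      BMZ.classOf σ' j.castSucc = π.symm (BMZ.classOf σ j.castSucc))
    (k : Fin (d + 1)) : σ' k = (σ k).trans π.symm := by
  have hcs : ∀ m : Fin (s + 1), σ' k m.castSucc = π.symm (σ k m.castSucc) := by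
    intro m
    have hlt : (m : ℕ) + (s + 1) * (k : ℕ) < BMZ.NN d s := by
      have h1 := m.isLt
      have h2 := k.isLt
      show (m : ℕ) + (s + 1) * (k : ℕ) < (d + 1) * (s + 1)
      nlinarith
    have h := hσ' ⟨(m : ℕ) + (s + 1) * (k : ℕ), hlt⟩
    rwa [classOf_eval σ' _ k m rfl, classOf_eval σ _ k m rfl] at h
  apply Equiv.ext
  intro x
  induction x using Fin.lastCases with
  | cast m => simp only [Equiv.trans_apply]; exact hcs m
  | last =>
    set f := σ' k with hf
    set g := (σ k).trans π.symm with hg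
    show f (Fin.last (s + 1)) = g (Fin.last (s + 1))
    by_cases hy : g.symm (f (Fin.last (s + 1))) = Fin.last (s + 1)
    · calc f (Fin.last (s + 1)) = g (g.symm (f (Fin.last (s + 1)))) :=
            (g.apply_symm_apply _).symm
        _ = g (Fin.last (s + 1)) := by rw [hy]
    · exfalso
      obtain ⟨m, hm⟩ := Fin.exists_castSucc_eq.mpr hy
      have h1 : f (Fin.last (s + 1)) = g (Fin.castSucc m) := by
        rw [hm, g.apply_symm_apply]
      have h2 : g (Fin.castSucc m) = f (Fin.castSucc m) := (hcs m).symm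
      have h3 := f.injective (h1.trans h2)
      exact (Fin.castSucc_lt_last m).ne' h3

end

end BMZAux

open scoped Matrix Kronecker

open BMZ in
/-- Let `𝒞` be a BMZ-collection, `ℛ = (R_1, …, R_r) ∈ 𝔅(𝒞)` (encoded by `σ`) and
let `π` be a permutation of `[r]`. If `σ'` encodes
`ℛ^π = (R_{π(1)} \\ {z}, …, R_{π(r-1)} \\ {z}, R_{π(r)} ∪ {z})` — that is,
each point other than `z` lies in class `i` of `ℛ^π` exactly if it lies in
class `π(i)` of `ℛ` — then `csgn(ℛ^π) = sgn(π)^(d+1)·csgn(ℛ)` and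
`gsgn(ℛ^π) = sgn(π)^(d+1)·gsgn(ℛ)`. -/
theorem sign_of_permuted_partition (d s : ℕ) (hd : 1 ≤ d)
    (w : Fin (s + 2) → EuclideanSpace ℝ (Fin (s + 1))) (hw : IsRegularSimplex w)
    (c : Idx d s → Pt d) (hc : Function.Injective c)
    (σ σ' : PartEnc d s) (π : Equiv.Perm (Fin (s + 2)))
    (hσ' : ∀ j : Fin (NN d s),
      classOf σ' j.castSucc = π.symm (classOf σ j.castSucc)) :
    csgn σ' = (Equiv.Perm.sign π : ℤ) ^ (d + 1) * csgn σ ∧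
    gsgn w c σ' = (Equiv.Perm.sign π : ℤ) ^ (d + 1) * gsgn w c σ := by
  classical
  obtain ⟨haff, -, hsum⟩ := hw
  have hkey : ∀ k, σ' k = (σ k).trans π.symm := BMZAux.perm_eq σ σ' π hσ'
  have hsign : ∀ k : Fin (d + 1),
      (Equiv.Perm.sign (σ' k) : ℤ) = (Equiv.Perm.sign π : ℤ) * (Equiv.Perm.sign (σ k) : ℤ) := by
    intro k
    rw [hkey k]
    have h1 : (σ k).trans π.symm = π.symm * σ k := rfl
    rw [h1, _root_.map_mul, Equiv.Perm.sign_symm, Units.val_mul]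
  constructor
  · unfold csgn
    calc ∏ k, ((Equiv.Perm.sign (σ' k) : ℤ))
        = ∏ k : Fin (d + 1), ((Equiv.Perm.sign π : ℤ) * (Equiv.Perm.sign (σ k) : ℤ)) :=
          Finset.prod_congr rfl fun k _ => hsign k
      _ = _ := by
          rw [Finset.prod_mul_distrib, Finset.prod_const, Finset.card_univ, Fintype.card_fin]
  · set τ : Equiv.Perm (Fin (s + 2)) := π.symm with hτ
    have hτs : Equiv.Perm.sign τ = Equiv.Perm.sign π := Equiv.Perm.sign_symm π
    have hMr1 : (BMZAux.Mr w 1).det ≠ 0 := BMZAux.det_Mr_one_ne_zero w haff hsum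
    set V : Matrix (Fin (s + 1)) (Fin (s + 1)) ℝ := (BMZAux.Mr w 1)ᵀ with hV
    set A : Matrix (Fin (s + 1)) (Fin (s + 1)) ℝ := (BMZAux.Mr w τ)ᵀ * V⁻¹ with hA
    have hVdet : IsUnit V.det := by
      rw [hV, Matrix.det_transpose]; exact isUnit_iff_ne_zero.mpr hMr1
    have hAV : A * V = (BMZAux.Mr w τ)ᵀ := by
      rw [hA, Matrix.mul_assoc, Matrix.nonsing_inv_mul V hVdet, Matrix.mul_one]
    have hcsA : ∀ (j : Fin (s + 1)) (l : Fin (s + 1)),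
        ∑ l', A l l' * w j.castSucc l' = w (τ j.castSucc) l := by
      intro j l
      have h := congrFun (congrFun hAV l) j
      rw [Matrix.mul_apply] at h
      simpa [hV, BMZAux.Mr] using h
    have hAapp : ∀ (m : Fin (s + 2)) (l : Fin (s + 1)),
        ∑ l', A l l' * w m l' = w (τ m) l := by
      intro m l
      induction m using Fin.lastCases with
      | cast j => exact hcsA j l
      | last =>
        have h1 : ∀ l' : Fin (s + 1),
            w (Fin.last (s + 1)) l' = -∑ j : Fin (s + 1), w (Fin.castSucc j) l' := by
          intro l'
          have h := congrArg (fun u => u l') hsum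
          rw [BMZAux.coordSum, Fin.sum_univ_castSucc] at h
          have h' : ∑ j : Fin (s + 1), w (Fin.castSucc j) l' + w (Fin.last (s + 1)) l' = 0 := h
          linarith
        calc ∑ l', A l l' * w (Fin.last (s + 1)) l'
            = ∑ l', ∑ j : Fin (s + 1), -(A l l' * w j.castSucc l') := by
              refine Finset.sum_congr rfl fun l' _ => ?_
              rw [h1 l', mul_neg, Finset.mul_sum, ← Finset.sum_neg_distrib]
          _ = ∑ j : Fin (s + 1), ∑ l', -(A l l' * w j.castSucc l') := Finset.sum_comm
          _ = ∑ j : Fin (s + 1), -(w (τ j.castSucc) l) := by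
              refine Finset.sum_congr rfl fun j _ => ?_
              rw [Finset.sum_neg_distrib, hcsA j l]
          _ = w (τ (Fin.last (s + 1))) l := by
              rw [Finset.sum_neg_distrib]
              have h := congrArg (fun u => u l) (BMZAux.sum_w w hsum τ)
              rw [BMZAux.coordSum] at h
              rw [h, BMZAux.coordNeg, neg_neg]
    unfold gsgn
    set G : Matrix (Fin (NN d s)) (Fin (NN d s)) ℝ :=
      Matrix.of fun i j => rows w c σ i (finProdFinEquiv.symm j) with hG
    set G' : Matrix (Fin (NN d s)) (Fin (NN d s)) ℝ :=
      Matrix.of fun i j => rows w c σ' i (finProdFinEquiv.symm j) with hG'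
    have hGG' : G' = G * (((1 : Matrix (Fin (d + 1)) (Fin (d + 1)) ℝ) ⊗ₖ Aᵀ).submatrix
        finProdFinEquiv.symm finProdFinEquiv.symm) := by
      ext i j
      rw [Matrix.mul_apply,
        ← Equiv.sum_comp (finProdFinEquiv (m := d + 1) (n := s + 1))
          (fun j' => G i j' * (((1 : Matrix (Fin (d + 1)) (Fin (d + 1)) ℝ) ⊗ₖ Aᵀ).submatrix
            finProdFinEquiv.symm finProdFinEquiv.symm) j' j)]
      simp only [hG, hG', Matrix.of_apply, Matrix.submatrix_apply, Equiv.symm_apply_apply,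
        Matrix.kroneckerMap_apply, Matrix.transpose_apply, Matrix.one_apply,
        rows, allClones, clone]
      rw [hσ' i]
      rw [Fintype.sum_prod_type]
      simp only [mul_ite, mul_one, mul_zero, ite_mul, zero_mul, Finset.sum_ite_irrel,
        Finset.sum_const_zero, Finset.sum_ite_eq', Finset.mem_univ, if_true]
      rw [← hAapp (classOf σ i.castSucc) (finProdFinEquiv.symm j).2, Finset.mul_sum]
      refine Finset.sum_congr rfl fun l _ => ?_
      ring
    have hdetA : A.det = ((Equiv.Perm.sign π : ℤ) : ℝ) := by
      rw [hA, Matrix.det_mul, Matrix.det_transpose, Matrix.det_nonsing_inv, hV,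
        Matrix.det_transpose, BMZAux.det_Mr w hsum τ, Ring.inverse_eq_inv,
        mul_assoc, mul_inv_cancel₀ hMr1, mul_one, hτs]
    rw [hGG', Matrix.det_mul, Matrix.det_submatrix_equiv_self, Matrix.det_kronecker,
      Matrix.det_one, one_pow, one_mul, Matrix.det_transpose, hdetA, Fintype.card_fin]
    exact BMZAux.sgnR_mul_pm (Equiv.Perm.sign π) (d + 1) G.det
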